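/- Suppose the components a_1,…,a_n of the constant vector field X_ψ on 𝕋^n satisfy k_1a_1 + ⋯ + k_l a_l = 0 with 1 ≤ l ≤ n−1 and all k_i ∈ ℤ∖{0}. Then the toral automorphism R induced by the matrix B ∈ GL(n,ℤ) that equals the identity except that its last row is (k_1,…,k_l,0,…,0,1) satisfies R_*X_ψ = X_ψ and R is not a translation. -/

import Mathlib

/-- Suppose the components `a₁, …, aₙ` of the nonzero constant vector field
`X_ψ = a` on `𝕋^n` satisfy `k₁ a₁ + ⋯ + k_l a_l = 0` with `1 ≤ l ≤ n - 1` and all `kᵢ ≠ 0`.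
Let `B ∈ GL(n,ℤ)` be the identity matrix with its last row replaced by
`(k₁, …, k_l, 0, …, 0, 1)`.  Then `det B = 1` (so `B ∈ GL(n,ℤ)`), `B · a = a` (so the induced
toral automorphism `R` satisfies `R_* X_ψ = X_ψ`, i.e. it commutes with the flow), and `R` is
not a translation. -/
theorem last_row_matrix_symmetry
    (n : ℕ) (hn : 2 ≤ n)
    (a : Fin n → ℝ) (ha : a ≠ 0)
    (l : ℕ) (hl1 : 1 ≤ l) (hln : l ≤ n - 1)
    (k : Fin n → ℤ)
    (hk : ∀ i : Fin n, (i : ℕ) < l → k i ≠ 0)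
    (hrel : ∑ i : Fin n, (if (i : ℕ) < l then (k i : ℝ) * a i else 0) = 0)
    (B : Matrix (Fin n) (Fin n) ℤ)
    (hB : ∀ i j : Fin n, B i j =
      if (i : ℕ) = n - 1 then
        (if (j : ℕ) < l then k j else 0) + (if j = i then 1 else 0)
      else
        (if j = i then 1 else 0))
    (ψ : ℝ → (Fin n → AddCircle (1 : ℝ)) → (Fin n → AddCircle (1 : ℝ)))
    (hψ : ∀ (t : ℝ) (θ : Fin n → AddCircle (1 : ℝ)),
      ψ t θ = fun i => θ i + (↑(t * a i) : AddCircle (1 : ℝ)))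
    (R : (Fin n → AddCircle (1 : ℝ)) → (Fin n → AddCircle (1 : ℝ)))
    (hR : ∀ θ : Fin n → AddCircle (1 : ℝ), R θ = fun i => ∑ j : Fin n, B i j • θ j) :
    B.det = 1 ∧
    (B.map (Int.cast : ℤ → ℝ)).mulVec a = a ∧
    (∀ (t : ℝ) (θ : Fin n → AddCircle (1 : ℝ)), R (ψ t θ) = ψ t (R θ)) ∧
    ¬ ∃ c : Fin n → AddCircle (1 : ℝ), ∀ θ : Fin n → AddCircle (1 : ℝ), R θ = θ + c := by
  have hn1 : n - 1 < n := by omega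
  have last : Fin n := ⟨n - 1, hn1⟩
  -- key real identity: the rows of B fix a
  have key : ∀ i : Fin n, ∑ j : Fin n, ((B i j : ℝ)) * a j = a i := by
    intro i
    by_cases hi : (i : ℕ) = n - 1
    · have : ∀ j : Fin n, ((B i j : ℝ)) * a j =
          (if (j : ℕ) < l then (k j : ℝ) * a j else 0) + (if j = i then a j else 0) := by
        intro j
        rw [hB i j, if_pos hi]
        push_cast
        split_ifs <;> ring
      rw [Finset.sum_congr rfl (fun j _ => this j), Finset.sum_add_distrib, hrel,
        Finset.sum_ite_eq', if_pos (Finset.mem_univ i), zero_add]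
    · have : ∀ j : Fin n, ((B i j : ℝ)) * a j = (if j = i then a j else 0) := by
        intro j
        rw [hB i j, if_neg hi]
        split_ifs <;> push_cast <;> ring
      rw [Finset.sum_congr rfl (fun j _ => this j),
        Finset.sum_ite_eq', if_pos (Finset.mem_univ i)]
  refine ⟨?_, ?_, ?_, ?_⟩
  · -- determinant
    have hlt : B.BlockTriangular ⇑OrderDual.toDual := by
      intro i j hij
      have hij' : (i : ℕ) < (j : ℕ) := hij
      rw [hB i j]
      have hji : j ≠ i := by intro h; omega
      by_cases hi : (i : ℕ) = n - 1
      · have : ¬ (j : ℕ) < l := by omega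
        simp [hi, this, hji]
      · simp [hi, hji]
    rw [Matrix.det_of_lowerTriangular B hlt]
    have : ∀ i : Fin n, B i i = 1 := by
      intro i
      rw [hB i i]
      by_cases hi : (i : ℕ) = n - 1
      · have h' : ¬ (n - 1) < l := by omega
        simp [hi, h']
      · simp [hi]
    simp [this]
  · -- mulVec
    funext i
    simpa [Matrix.mulVec, dotProduct, Matrix.map_apply] using key i
  · -- commutation with the flow
    intro t θ
    simp only [hψ, hR]
    funext i
    show (∑ j : Fin n, B i j • (θ j + (↑(t * a j) : AddCircle (1:ℝ)))) =
      (∑ j : Fin n, B i j • θ j) + (↑(t * a i) : AddCircle (1:ℝ))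
    simp only [smul_add, Finset.sum_add_distrib]
    congr 1
    have hcast : ∀ (z : ℤ) (x : ℝ), z • ((x : AddCircle (1:ℝ))) = ((z * x : ℝ) : AddCircle (1:ℝ)) := by
      intro z x
      rw [← zsmul_eq_mul]
      exact ((QuotientAddGroup.mk' (AddSubgroup.zmultiples (1:ℝ))).map_zsmul z x).symm
    calc (∑ j : Fin n, B i j • ((↑(t * a j)) : AddCircle (1:ℝ)))
        = ∑ j : Fin n, ((((B i j : ℝ) * (t * a j) : ℝ)) : AddCircle (1:ℝ)) := by
          exact Finset.sum_congr rfl (fun j _ => hcast _ _)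
      _ = ((∑ j : Fin n, (B i j : ℝ) * (t * a j) : ℝ) : AddCircle (1:ℝ)) := by
          exact (map_sum (QuotientAddGroup.mk' (AddSubgroup.zmultiples (1:ℝ))) _ _).symm
      _ = ((t * a i : ℝ) : AddCircle (1:ℝ)) := by
          congr 1
          calc ∑ j : Fin n, (B i j : ℝ) * (t * a j)
              = t * ∑ j : Fin n, (B i j : ℝ) * a j := by
                rw [Finset.mul_sum]; exact Finset.sum_congr rfl (fun j _ => by ring)
            _ = t * a i := by rw [key i]
  · -- not a translation
    rintro ⟨c, hc⟩
    have hcast : ∀ (z : ℤ) (x : ℝ), z • ((x : AddCircle (1:ℝ))) = ((z * x : ℝ) : AddCircle (1:ℝ)) := by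
      intro z x
      rw [← zsmul_eq_mul]
      exact ((QuotientAddGroup.mk' (AddSubgroup.zmultiples (1:ℝ))).map_zsmul z x).symm
    have hc0 : c = 0 := by
      have h0 := hc 0
      rw [hR] at h0
      have : (fun i => ∑ j : Fin n, B i j • (0 : Fin n → AddCircle (1:ℝ)) j) = (0 : Fin n → AddCircle (1:ℝ)) := by
        funext i; simp
      rw [this, zero_add] at h0
      exact h0.symm
    subst hc0
    set j0 : Fin n := ⟨0, by omega⟩ with hj0
    have hk0 : k j0 ≠ 0 := hk j0 (by show 0 < l; omega)
    have hk0' : (k j0 : ℝ) ≠ 0 := Int.cast_ne_zero.mpr hk0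
    set θ : Fin n → AddCircle (1:ℝ) :=
      fun j => if j = j0 then ((1 / (2 * (k j0 : ℝ)) : ℝ) : AddCircle (1:ℝ)) else 0 with hθ
    have h1 := hc θ
    rw [hR, add_zero] at h1
    have hlast : Fin.mk (n-1) hn1 ≠ j0 := by
      intro h
      have := congrArg Fin.val h
      simp [hj0] at this
      omega
    have h2 := congrFun h1 ⟨n - 1, hn1⟩
    have hsum : (∑ j : Fin n, B ⟨n - 1, hn1⟩ j • θ j) =
        B ⟨n - 1, hn1⟩ j0 • ((1 / (2 * (k j0 : ℝ)) : ℝ) : AddCircle (1:ℝ)) := by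
      rw [Finset.sum_eq_single j0]
      · simp [hθ]
      · intro b _ hb
        simp [hθ, hb]
      · intro h; exact absurd (Finset.mem_univ j0) h
    have hBval : B ⟨n - 1, hn1⟩ j0 = k j0 := by
      rw [hB]
      simp [hj0, hl1, hlast.symm, Nat.lt_of_lt_of_le (by norm_num : (0:ℕ) < 1) hl1]
      omega
    have hθlast : θ ⟨n - 1, hn1⟩ = 0 := by simp [hθ, hlast]
    rw [hsum, hBval, hθlast, hcast] at h2
    have : ((k j0 : ℝ) * (1 / (2 * (k j0 : ℝ)))) = 1 / 2 := by
      field_simp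
    rw [this] at h2
    rw [AddCircle.coe_eq_zero_iff] at h2
    obtain ⟨m, hm⟩ := h2
    have : (m : ℝ) = 1 / 2 := by simpa using hm
    have : (2 : ℝ) * m = 1 := by rw [this]; ring
    have : (2 * m : ℤ) = 1 := by exact_mod_cast this
    omega
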